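/- Let (V, L, ∂) be a crossed module over a Lie algebra with M = ker ∂ and g = coker ∂, and let s, q be linear sections of π and ∂ respectively. Then the map θ : ∧³g → M defined by θ(x,y,z) = [s(x), g(y,z)] - [s(y), g(x,z)] + [s(z), g(x,y)] - g([x,y], z) + g([x,z], y) - g([y,z], x), with g(x,y) = q([s(x), s(y)] - s[x,y]), is a 3-cocycle in the Chevalley-Eilenberg complex of g with coefficients in M: δθ = 0. -/
import Mathlib


variable {K L V g : Type} [Field K] [LieRing L] [LieAlgebra K L]
  [AddCommGroup V] [Module K V] [LieRingModule L V] [LieModule K L V]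
  [LieRing g] [LieAlgebra K g]

/-- `g(x,y) = q([s(x), s(y)] - s[x,y])`. -/
def gAux (s : g →ₗ[K] L) (q : L →ₗ[K] V) (x y : g) : V :=
  q (⁅s x, s y⁆ - s ⁅x, y⁆)

/-- The `3`-cochain `θ` associated to a crossed module with chosen sections `s`, `q`. -/
def theta (s : g →ₗ[K] L) (q : L →ₗ[K] V) (x y z : g) : V :=
  ⁅s x, gAux s q y z⁆ - ⁅s y, gAux s q x z⁆ + ⁅s z, gAux s q x y⁆
    - gAux s q ⁅x, y⁆ z + gAux s q ⁅x, z⁆ y - gAux s q ⁅y, z⁆ x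

/-- the alternating cochain `θ : ∧³g → M` is a `3`-cocycle in the
Chevalley-Eilenberg complex of `g` with coefficients in `M = ker ∂` (where the `g`-action
on `M` is computed via the lift `s`, which is legitimate since the induced action is
independent of the choice of lift). -/
theorem crossed_ext_stmt7
    (d : V →ₗ[K] L)
    (hmod : ∀ (x : L) (v : V), d ⁅x, v⁆ = ⁅x, d v⁆)
    (hcross : ∀ v w : V, ⁅d v, w⁆ = - ⁅d w, v⁆)
    (π : L →ₗ⁅K⁆ g) (hπ : Function.Surjective π)
    (hker : ∀ z : L, π z = 0 ↔ z ∈ LinearMap.range d)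
    (s : g →ₗ[K] L) (hs : ∀ x : g, π (s x) = x)
    (q : L →ₗ[K] V) (hq : ∀ z ∈ LinearMap.range d, d (q z) = z) :
    ∀ x₁ x₂ x₃ x₄ : g,
      ⁅s x₁, theta s q x₂ x₃ x₄⁆ - ⁅s x₂, theta s q x₁ x₃ x₄⁆
        + ⁅s x₃, theta s q x₁ x₂ x₄⁆ - ⁅s x₄, theta s q x₁ x₂ x₃⁆
        - theta s q ⁅x₁, x₂⁆ x₃ x₄ + theta s q ⁅x₁, x₃⁆ x₂ x₄
        - theta s q ⁅x₁, x₄⁆ x₂ x₃ - theta s q ⁅x₂, x₃⁆ x₁ x₄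
        + theta s q ⁅x₂, x₄⁆ x₁ x₃ - theta s q ⁅x₃, x₄⁆ x₁ x₂ = 0 := by
  have hdG : ∀ x y : g, d (gAux s q x y) = ⁅s x, s y⁆ - s ⁅x, y⁆ := by
    intro x y
    apply hq
    rw [← hker]
    simp [hs]
  have hsb : ∀ x y : g, s ⁅x, y⁆ = ⁅s x, s y⁆ - d (gAux s q x y) := by
    intro x y; rw [hdG]; abel
  have hGsub : ∀ u v w : g, gAux s q (u - v) w = gAux s q u w - gAux s q v w := by
    intro u v w
    simp only [gAux, map_sub, sub_lie]
    abel
  have hGskew : ∀ u v : g, gAux s q u v = - gAux s q v u := by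
    intro u v
    have h1 : (⁅v,u⁆:g) = -⁅u,v⁆ := by rw [← lie_skew]
    have h2 : (⁅s v, s u⁆:L) = -⁅s u, s v⁆ := by rw [← lie_skew]
    simp only [gAux, h1, h2, map_neg, map_sub]
    abel
  have hjac : ∀ a b c : g, (⁅⁅b,c⁆,a⁆ : g) = ⁅⁅a,c⁆,b⁆ - ⁅⁅a,b⁆,c⁆ := by
    intro a b c
    calc (⁅⁅b,c⁆,a⁆:g) = -⁅a,⁅b,c⁆⁆ := by rw [← lie_skew]
      _ = -(⁅⁅a,b⁆,c⁆ + ⁅b,⁅a,c⁆⁆) := by rw [leibniz_lie]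
      _ = ⁅⁅a,c⁆,b⁆ - ⁅⁅a,b⁆,c⁆ := by
          have : (⁅b,⁅a,c⁆⁆:g) = -⁅⁅a,c⁆,b⁆ := by rw [← lie_skew]
          rw [this]; abel
  have hD : ∀ a b c w : g,
      gAux s q ⁅⁅b,c⁆,a⁆ w = gAux s q ⁅⁅a,c⁆,b⁆ w - gAux s q ⁅⁅a,b⁆,c⁆ w := by
    intro a b c w
    rw [hjac a b c, hGsub]
  intro x₁ x₂ x₃ x₄
  simp only [theta]
  rw [hsb x₁ x₂, hsb x₁ x₃, hsb x₁ x₄, hsb x₂ x₃, hsb x₂ x₄, hsb x₃ x₄]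
  rw [hD x₁ x₂ x₃ x₄, hD x₁ x₂ x₄ x₃, hD x₁ x₃ x₄ x₂, hD x₂ x₃ x₄ x₁]
  rw [hGskew ⁅x₃,x₄⁆ ⁅x₁,x₂⁆, hGskew ⁅x₂,x₄⁆ ⁅x₁,x₃⁆, hGskew ⁅x₂,x₃⁆ ⁅x₁,x₄⁆]
  simp only [sub_lie, lie_sub, lie_add, lie_neg, neg_lie, lie_lie]
  rw [hcross (gAux s q x₃ x₄) (gAux s q x₁ x₂),
      hcross (gAux s q x₂ x₄) (gAux s q x₁ x₃),
      hcross (gAux s q x₂ x₃) (gAux s q x₁ x₄)]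
  abel
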